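/- Let D be a triangulated category with cluster tilting subcategory U such that D/U has finite global dimension. If V is a cluster tilting subcategory of D, then Ext¹_{D/U}(v̄, v̄′) = 0 for all v, v′ ∈ V; that is, the projected subcategory V̄ ⊆ D/U is rigid. -/

import Mathlib

open CategoryTheory Limits Pretriangulated Opposite

noncomputable section

set_option linter.unusedSectionVars false
set_option maxHeartbeats 1000000

/-- The morphisms `x ⟶ y` in a category that factor through an object of `U`. -/
def FactorsThru {D : Type*} [Category D] (U : Set D) {x y : D} (f : x ⟶ y) : Prop :=
  ∃ (u : D) (_ : u ∈ U) (g : x ⟶ u) (h : u ⟶ y), g ≫ h = f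

/-- A full subcategory (given by its set of objects) is precovering. -/
def IsPrecovering {D : Type*} [Category D] (V : Set D) : Prop :=
  ∀ x : D, ∃ (v : D) (_ : v ∈ V) (p : v ⟶ x),
    ∀ v' ∈ V, ∀ f : v' ⟶ x, ∃ g : v' ⟶ v, g ≫ p = f

/-- A full subcategory (given by its set of objects) is preenveloping. -/
def IsPreenveloping {D : Type*} [Category D] (V : Set D) : Prop :=
  ∀ x : D, ∃ (v : D) (_ : v ∈ V) (i : x ⟶ v),
    ∀ v' ∈ V, ∀ f : x ⟶ v', ∃ g : v ⟶ v', i ≫ g = f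

/-- A full subcategory `V` of a triangulated category is maximal 1-orthogonal if
`v ∈ V ⇔ Hom(V, Σv) = 0 ⇔ Hom(v, ΣV) = 0`. -/
def MaxOneOrthogonal {D : Type*} [Category D] [Preadditive D] [HasShift D ℤ] (V : Set D) : Prop :=
  (∀ x : D, x ∈ V ↔ ∀ v ∈ V, ∀ f : v ⟶ x⟦(1:ℤ)⟧, f = 0) ∧
  (∀ x : D, x ∈ V ↔ ∀ v ∈ V, ∀ f : x ⟶ v⟦(1:ℤ)⟧, f = 0)

/-- A cluster tilting subcategory is a maximal 1-orthogonal subcategory which is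
precovering and preenveloping. -/
def ClusterTilting {D : Type*} [Category D] [Preadditive D] [HasShift D ℤ] (U : Set D) : Prop :=
  MaxOneOrthogonal U ∧ IsPrecovering U ∧ IsPreenveloping U

/-- An abelian category has finite global dimension if `Ext^m` vanishes uniformly for all
sufficiently large `m`. -/
def FinGlobalDim (k : Type*) [Field k] (A : Type*) [Category A] [Abelian A] [Linear k A]
    [EnoughProjectives A] : Prop :=
  ∃ n : ℕ, ∀ m : ℕ, n ≤ m → ∀ x y : A, Subsingleton (((Ext k A m).obj (op x)).obj y)

namespace Stmt10Aux

variable {D : Type*} [Category D] [Preadditive D] [HasZeroObject D]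
    [HasShift D ℤ] [∀ (n : ℤ), (shiftFunctor D n).Additive] [Pretriangulated D]

section DLemmas

variable {U : Set D}

lemma rigid (hU : ClusterTilting U) {u u' : D} (hu : u ∈ U) (hu' : u' ∈ U)
    (f : u ⟶ u'⟦(1:ℤ)⟧) : f = 0 :=
  ((hU.1.1 u').mp hu') u hu f

lemma mem_of_iso (hU : ClusterTilting U) {x y : D} (e : x ≅ y) (hy : y ∈ U) : x ∈ U := by
  refine (hU.1.1 x).mpr fun u hu f => ?_
  have h0 : f ≫ ((shiftFunctor D (1:ℤ)).mapIso e).hom = 0 := rigid hU hu hy _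
  have : f = (f ≫ ((shiftFunctor D (1:ℤ)).mapIso e).hom) ≫
      ((shiftFunctor D (1:ℤ)).mapIso e).inv := by simp
  rw [this, h0, zero_comp]

lemma t_to_u_zero (hU : ClusterTilting U) {t u : D} (ht : t⟦(1:ℤ)⟧ ∈ U) (hu : u ∈ U)
    (f : t ⟶ u) : f = 0 := by
  apply (shiftFunctor D (1:ℤ)).map_injective
  rw [Functor.map_zero]
  exact rigid hU ht hu _

lemma shift_neg_one_zero {x y : D} (hz : ∀ f : x ⟶ y⟦(1:ℤ)⟧, f = 0)
    (h : x⟦(-1:ℤ)⟧ ⟶ y) : h = 0 := by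
  apply (shiftFunctor D (1:ℤ)).map_injective
  rw [Functor.map_zero]
  have h1 : (shiftEquiv D (1:ℤ)).counitIso.inv.app x ≫ (shiftFunctor D (1:ℤ)).map h = 0 :=
    hz _
  have h2 := (shiftEquiv D (1:ℤ)).counitIso.hom.app x ≫= h1
  erw [Iso.hom_inv_id_app_assoc, comp_zero] at h2; exact h2

end DLemmas

section Main

variable {U : Set D}
variable {A : Type*} [Category A] [Abelian A]

/-- The data of a "combined precover" of `y`, its projectivity/epi properties in the
quotient, and the inverse-rotated cone triangle. -/
structure PRD (U : Set D) (π : D ⥤ A) (y : D) where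
  t : D
  ht : t⟦(1:ℤ)⟧ ∈ U
  tp : t ⟶ y
  tfac : ∀ ⦃s : D⦄, s⟦(1:ℤ)⟧ ∈ U → ∀ f : s ⟶ y, ∃ g : s ⟶ t, g ≫ tp = f
  tepi : Epi (π.map tp)
  w : D
  incl : t ⟶ w
  p : w ⟶ y
  hincl : incl ≫ p = tp
  facU : ∀ ⦃u : D⦄, u ∈ U → ∀ f : u ⟶ y, ∃ g : u ⟶ w, g ≫ p = f
  proj : Projective (π.obj w)
  yn : D
  a : yn ⟶ w
  δ : y ⟶ yn⟦(1:ℤ)⟧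
  dist : Triangle.mk a p δ ∈ distTriang D

variable {π : D ⥤ A} [π.Full] [π.EssSurj] [π.Additive]

lemma PRD.facT {y : D} (R : PRD U π y) ⦃s : D⦄ (hs : s⟦(1:ℤ)⟧ ∈ U) (f : s ⟶ y) :
    ∃ g : s ⟶ R.w, g ≫ R.p = f := by
  obtain ⟨g₀, h₀⟩ := R.tfac hs f
  exact ⟨g₀ ≫ R.incl, by rw [Category.assoc, R.hincl]; exact h₀⟩

lemma PRD.pepi {y : D} (R : PRD U π y) : Epi (π.map R.p) := by
  have h := R.tepi
  rw [← R.hincl, π.map_comp] at h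
  exact @epi_of_epi _ _ _ _ _ _ _ h

lemma hπT (hU : ClusterTilting U)
    (hπ : ∀ ⦃x y : D⦄ (f : x ⟶ y), π.map f = 0 ↔ FactorsThru U f)
    {t z : D} (ht : t⟦(1:ℤ)⟧ ∈ U) (g : t ⟶ z) (h : π.map g = 0) : g = 0 := by
  obtain ⟨u, hu, α, β, hab⟩ := (hπ g).mp h
  rw [← hab, t_to_u_zero hU ht hu α, zero_comp]

lemma isZero_obj (hπ : ∀ ⦃x y : D⦄ (f : x ⟶ y), π.map f = 0 ↔ FactorsThru U f)
    {u : D} (hu : u ∈ U) : IsZero (π.obj u) := by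
  rw [IsZero.iff_id_eq_zero, ← π.map_id]
  exact (hπ (𝟙 u)).mpr ⟨u, hu, 𝟙 u, 𝟙 u, by simp⟩

lemma projective_of_t (hU : ClusterTilting U)
    (hπ : ∀ ⦃x y : D⦄ (f : x ⟶ y), π.map f = 0 ↔ FactorsThru U f)
    {t : D} (ht : t⟦(1:ℤ)⟧ ∈ U) : Projective (π.obj t) := by
  constructor
  intro E X f e he
  set zE := π.objPreimage E with hzE
  set zX := π.objPreimage X with hzX
  set iE := π.objObjPreimageIso E with hiE
  set iX := π.objObjPreimageIso X with hiX
  set h := π.preimage (iE.hom ≫ e ≫ iX.inv) with hh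
  have hmh : π.map h = iE.hom ≫ e ≫ iX.inv := π.map_preimage _
  have hepi : Epi (π.map h) := by
    rw [hmh]
    exact epi_comp _ _
  obtain ⟨c, j, θ, hT⟩ := Pretriangulated.distinguished_cocone_triangle h
  have hj0 : π.map j = 0 := by
    have h12 : h ≫ j = 0 := comp_distTriang_mor_zero₁₂ _ hT
    have : π.map h ≫ π.map j = π.map h ≫ 0 := by
      rw [← π.map_comp, h12, π.map_zero, comp_zero]
    exact (cancel_epi (π.map h)).mp this
  obtain ⟨u, hu, α, β, hab⟩ := (hπ j).mp hj0
  set g := π.preimage (f ≫ iX.inv) with hg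
  have hmg : π.map g = f ≫ iX.inv := π.map_preimage _
  have hgj : g ≫ j = 0 := by
    rw [← hab, ← Category.assoc, t_to_u_zero hU ht hu (g ≫ α), zero_comp]
  obtain ⟨s', hs'⟩ : ∃ s' : t ⟶ π.objPreimage E, g = s' ≫ h := Triangle.coyoneda_exact₂ _ hT g hgj
  have hs'' : g = s' ≫ h := hs'
  refine ⟨π.map s' ≫ iE.hom, ?_⟩
  have : π.map s' ≫ (iE.hom ≫ e ≫ iX.inv) = f ≫ iX.inv := by
    rw [← hmh, ← hmg, ← π.map_comp, ← hs'']
  calc (π.map s' ≫ iE.hom) ≫ e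
      = (π.map s' ≫ (iE.hom ≫ e ≫ iX.inv)) ≫ iX.hom := by simp
    _ = (f ≫ iX.inv) ≫ iX.hom := by rw [this]
    _ = f := by simp

lemma nonempty_PRD (hU : ClusterTilting U)
    (hπ : ∀ ⦃x y : D⦄ (f : x ⟶ y), π.map f = 0 ↔ FactorsThru U f)
    (y : D) : Nonempty (PRD U π y) := by
  classical
  -- T-precover
  obtain ⟨u₁, hu₁, qT, hqT⟩ := hU.2.1 (y⟦(1:ℤ)⟧)
  set t := u₁⟦(-1:ℤ)⟧ with htdef
  have ht : t⟦(1:ℤ)⟧ ∈ U := mem_of_iso hU ((shiftEquiv D (1:ℤ)).counitIso.app u₁) hu₁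
  set tp : t ⟶ y := (shiftFunctor D (1:ℤ)).preimage ((shiftEquiv D (1:ℤ)).counitIso.hom.app u₁ ≫ qT) with htp
  have htpm : (shiftFunctor D (1:ℤ)).map tp = (shiftEquiv D (1:ℤ)).counitIso.hom.app u₁ ≫ qT := (shiftFunctor D (1:ℤ)).map_preimage _
  have tfac : ∀ ⦃s : D⦄, s⟦(1:ℤ)⟧ ∈ U → ∀ f : s ⟶ y, ∃ g : s ⟶ t, g ≫ tp = f := by
    intro s hs f
    obtain ⟨g', hg'⟩ := hqT _ hs ((shiftFunctor D (1:ℤ)).map f)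
    refine ⟨(shiftFunctor D (1:ℤ)).preimage (g' ≫ (shiftEquiv D (1:ℤ)).counitIso.inv.app u₁), ?_⟩
    apply (shiftFunctor D (1:ℤ)).map_injective
    erw [(shiftFunctor D (1:ℤ)).map_comp, (shiftFunctor D (1:ℤ)).map_preimage, htpm, Category.assoc, Iso.inv_hom_id_app_assoc]
    exact hg'
  -- cone triangle on `tp` and membership of its cone in `U`
  obtain ⟨c₂, j₂, θ₂, hT₂⟩ := Pretriangulated.distinguished_cocone_triangle tp
  have h₁₂ : tp ≫ j₂ = 0 := comp_distTriang_mor_zero₁₂ _ hT₂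
  have hc₂ : c₂ ∈ U := by
    refine (hU.1.1 c₂).mpr fun u hu f => ?_
    have hside : f ≫ (shiftFunctor D (1:ℤ)).map
        (((Triangle.mk tp j₂ θ₂).rotate.rotate).mor₁) = 0 := rigid hU hu ht _
    obtain ⟨g, hg⟩ : ∃ g : u ⟶ y⟦(1:ℤ)⟧, f = g ≫ (-((shiftFunctor D (1:ℤ)).map j₂)) := Triangle.coyoneda_exact₁ _
      (rot_of_distTriang _ (rot_of_distTriang _ hT₂)) f hside
    have hg' : f = g ≫ (-((shiftFunctor D (1:ℤ)).map j₂)) := hg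
    have hgj : g ≫ (shiftFunctor D (1:ℤ)).map j₂ = 0 := by
      have hmem : (u⟦(-1:ℤ)⟧)⟦(1:ℤ)⟧ ∈ U := mem_of_iso hU ((shiftEquiv D (1:ℤ)).counitIso.app u) hu
      have hggm : (shiftFunctor D (1:ℤ)).map ((shiftFunctor D (1:ℤ)).preimage
          ((shiftEquiv D (1:ℤ)).counitIso.hom.app u ≫ g)) =
          (shiftEquiv D (1:ℤ)).counitIso.hom.app u ≫ g := (shiftFunctor D (1:ℤ)).map_preimage _
      obtain ⟨g₂, hg₂⟩ := tfac hmem ((shiftFunctor D (1:ℤ)).preimage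
          ((shiftEquiv D (1:ℤ)).counitIso.hom.app u ≫ g))
      have hcomp : (shiftEquiv D (1:ℤ)).counitIso.hom.app u ≫ g ≫ (shiftFunctor D (1:ℤ)).map j₂ =
          (shiftEquiv D (1:ℤ)).counitIso.hom.app u ≫ 0 := by
        erw [comp_zero, ← Category.assoc, ← hggm, ← (shiftFunctor D (1:ℤ)).map_comp, ← hg₂, Category.assoc,
          h₁₂, comp_zero, (shiftFunctor D (1:ℤ)).map_zero]
        rfl
      exact (cancel_epi ((shiftEquiv D (1:ℤ)).counitIso.hom.app u)).mp hcomp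
    rw [hg', Preadditive.comp_neg, hgj, neg_zero]
  -- epi-ness of `π.map tp`
  have tepi : Epi (π.map tp) := by
    rw [Preadditive.epi_iff_cancel_zero]
    intro Z φ h0
    set z := π.objPreimage Z
    set iz := π.objObjPreimageIso Z
    set q' := π.preimage (φ ≫ iz.inv) with hq'
    have hq'm : π.map q' = φ ≫ iz.inv := π.map_preimage _
    have hπ0 : π.map (tp ≫ q') = 0 := by
      rw [π.map_comp, hq'm, ← Category.assoc, h0, zero_comp]
    have htq : tp ≫ q' = 0 := hπT hU hπ ht _ hπ0
    obtain ⟨r, hr⟩ := Triangle.yoneda_exact₂ _ hT₂ q' htq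
    have hfac : π.map q' = 0 := (hπ q').mpr ⟨c₂, hc₂, j₂, r, hr.symm⟩
    have : φ ≫ iz.inv = 0 := by rw [← hq'm, hfac]
    calc φ = (φ ≫ iz.inv) ≫ iz.hom := by simp
      _ = 0 := by rw [this, zero_comp]
  -- U-precover
  obtain ⟨u₀, hu₀, pu, hpu⟩ := hU.2.1 y
  -- the combined precover
  set w := t ⊞ u₀ with hwdef
  set p : w ⟶ y := biprod.desc tp pu with hpdef
  have hincl : biprod.inl ≫ p = tp := biprod.inl_desc _ _
  have facU : ∀ ⦃u : D⦄, u ∈ U → ∀ f : u ⟶ y, ∃ g : u ⟶ w, g ≫ p = f := by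
    intro u hu f
    obtain ⟨g', hg'⟩ := hpu u hu f
    exact ⟨g' ≫ biprod.inr, by rw [Category.assoc, hpdef, biprod.inr_desc]; exact hg'⟩
  -- `π.obj w` is projective
  have hwiso : π.obj w ≅ π.obj t := by
    refine ⟨π.map biprod.fst, π.map biprod.inl, ?_, ?_⟩
    · have htot : (biprod.fst ≫ biprod.inl : w ⟶ w) =
          𝟙 w - biprod.snd ≫ biprod.inr := by
        rw [eq_sub_iff_add_eq, biprod.total]
      rw [← π.map_comp, htot, Functor.map_sub, π.map_id, π.map_comp]
      have hz : π.map (biprod.inr : u₀ ⟶ w) = 0 :=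
        (isZero_obj hπ hu₀).eq_of_src _ _
      rw [hz, comp_zero, sub_zero]
    · rw [← π.map_comp, biprod.inl_fst, π.map_id]
  have proj : Projective (π.obj w) :=
    Projective.of_iso hwiso.symm (projective_of_t hU hπ ht)
  -- the cone triangle on `p`, inverse-rotated
  obtain ⟨c, jc, θc, hTc⟩ := Pretriangulated.distinguished_cocone_triangle p
  have hdist : Triangle.mk ((Triangle.mk p jc θc).invRotate.mor₁) p
      ((Triangle.mk p jc θc).invRotate.mor₃) ∈ distTriang D :=
    inv_rot_of_distTriang _ hTc
  exact ⟨⟨t, ht, tp, tfac, tepi, w, biprod.inl, p, hincl, facU, proj,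
    c⟦(-1:ℤ)⟧, (Triangle.mk p jc θc).invRotate.mor₁,
    (Triangle.mk p jc θc).invRotate.mor₃, hdist⟩⟩

section Tower

variable (F : ∀ y : D, PRD U π y) (v : D)

/-- The tower of syzygy objects over `v`. -/
def YD : ℕ → D := fun n => Nat.rec v (fun _ z => (F z).yn) n

/-- The differentials of the projective resolution, at the level of `D`. -/
def dD (n : ℕ) : (F (YD F v (n+1))).w ⟶ (F (YD F v n)).w :=
  (F (YD F v (n+1))).p ≫ (F (YD F v n)).a

lemma dD_comp (n : ℕ) : dD F v (n+1) ≫ dD F v n = 0 := by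
  have h0 : (F (YD F v (n+1))).a ≫ (F (YD F v (n+1))).p = 0 :=
    comp_distTriang_mor_zero₁₂ _ (F (YD F v (n+1))).dist
  dsimp only [dD]
  erw [Category.assoc, reassoc_of% h0, zero_comp, comp_zero]

lemma dD_p (n : ℕ) : dD F v n ≫ (F (YD F v n)).p = 0 := by
  have h0 : (F (YD F v n)).a ≫ (F (YD F v n)).p = 0 :=
    comp_distTriang_mor_zero₁₂ _ (F (YD F v n)).dist
  dsimp only [dD]
  erw [Category.assoc, h0, comp_zero]

/-- The projective resolution complex of `π.obj v`. -/
def resCplx : ChainComplex A ℕ :=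
  ChainComplex.of (fun n => π.obj ((F (YD F v n)).w)) (fun n => π.map (dD F v n))
    (fun n => by rw [← π.map_comp, dD_comp, π.map_zero])

lemma resCplx_d (n : ℕ) : (resCplx F v).d (n+1) n = π.map (dD F v n) :=
  ChainComplex.of_d (fun n => π.obj ((F (YD F v n)).w)) (fun n => π.map (dD F v n))
    n

/-- Maps into the first object of an inverse-rotated triangle coming from a combined
precover compose to zero with the first morphism, when the source is a shifted `U`-object. -/
lemma kill_into (hU : ClusterTilting U) {y : D} (R : PRD U π y) {s : D}
    (hs : s⟦(1:ℤ)⟧ ∈ U) (r : s ⟶ y⟦(-1:ℤ)⟧) :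
    r ≫ (Triangle.mk R.a R.p R.δ).invRotate.mor₁ = 0 := by
  have hpδ : R.p ≫ R.δ = 0 := comp_distTriang_mor_zero₂₃ _ R.dist
  have hr3 : r ≫ (shiftFunctor D (-1:ℤ)).map R.δ = 0 := by
    have hm : (shiftFunctor D (-1:ℤ)).map ((shiftFunctor D (-1:ℤ)).preimage
        ((shiftEquiv D (1:ℤ)).unitIso.inv.app s ≫ r)) =
        (shiftEquiv D (1:ℤ)).unitIso.inv.app s ≫ r :=
      (shiftFunctor D (-1:ℤ)).map_preimage _
    obtain ⟨g, hg⟩ := R.facU hs ((shiftFunctor D (-1:ℤ)).preimage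
        ((shiftEquiv D (1:ℤ)).unitIso.inv.app s ≫ r))
    have hcomp : (shiftEquiv D (1:ℤ)).unitIso.inv.app s ≫
        r ≫ (shiftFunctor D (-1:ℤ)).map R.δ =
        (shiftEquiv D (1:ℤ)).unitIso.inv.app s ≫ 0 := by
      erw [comp_zero, ← Category.assoc, ← hm, ← (shiftFunctor D (-1:ℤ)).map_comp, ← hg,
        Category.assoc, hpδ, comp_zero, (shiftFunctor D (-1:ℤ)).map_zero]
      rfl
    exact (cancel_epi ((shiftEquiv D (1:ℤ)).unitIso.inv.app s)).mp hcomp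
  dsimp only [Triangle.invRotate, Triangle.mk]
  erw [Preadditive.comp_neg, ← Category.assoc, hr3, zero_comp, neg_zero]
  rfl

lemma kill_step (hU : ClusterTilting U) (y : D) {s : D} (hs : s⟦(1:ℤ)⟧ ∈ U)
    (m : s ⟶ (F (F y).yn).w)
    (hm : (m ≫ (F (F y).yn).p) ≫ (F y).a = 0) : m ≫ (F (F y).yn).p = 0 := by
  obtain ⟨r, hr⟩ := Triangle.coyoneda_exact₂ _ (inv_rot_of_distTriang _ (F y).dist)
    (m ≫ (F (F y).yn).p) hm
  erw [hr]
  exact kill_into hU (F y) hs r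

lemma factor_step (y : D) {s : D} (hs : s⟦(1:ℤ)⟧ ∈ U) (m : s ⟶ (F y).w)
    (hm : m ≫ (F y).p = 0) :
    ∃ g : s ⟶ (F (F y).yn).w, m = g ≫ ((F (F y).yn).p ≫ (F y).a) := by
  obtain ⟨g₀, hg₀⟩ := Triangle.coyoneda_exact₂ _ (F y).dist m hm
  obtain ⟨g₁, hg₁⟩ := (F (F y).yn).facT hs g₀
  refine ⟨g₁, ?_⟩
  erw [hg₀, ← hg₁, Category.assoc]
  rfl

lemma refine_epi (F : ∀ y : D, PRD U π y) (X : D) (A' : A) (x₂ : A' ⟶ π.obj X) :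
    ∃ (s : D) (_ : s⟦(1:ℤ)⟧ ∈ U) (ρ : π.obj s ⟶ A') (_ : Epi ρ) (m : s ⟶ X),
      ρ ≫ x₂ = π.map m := by
  have h1 : Epi (π.map (F (π.objPreimage A')).tp) := (F _).tepi
  refine ⟨(F (π.objPreimage A')).t, (F (π.objPreimage A')).ht,
    π.map (F (π.objPreimage A')).tp ≫ (π.objObjPreimageIso A').hom, ?_,
    π.preimage ((π.map (F (π.objPreimage A')).tp ≫ (π.objObjPreimageIso A').hom) ≫ x₂), ?_⟩
  · exact epi_comp _ _
  · rw [π.map_preimage]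

lemma resCplx_exactAt (hU : ClusterTilting U)
    (hπ : ∀ ⦃x y : D⦄ (f : x ⟶ y), π.map f = 0 ↔ FactorsThru U f) (n : ℕ) : (resCplx F v).ExactAt (n+1) := by
  rw [HomologicalComplex.exactAt_iff' _ (n+1+1) (n+1) n (by simp) (by simp)]
  rw [ShortComplex.exact_iff_exact_up_to_refinements]
  intro A' x₂ hx₂
  dsimp [HomologicalComplex.sc', HomologicalComplex.shortComplexFunctor', resCplx] at x₂ hx₂ ⊢
  simp only [ChainComplex.of_d] at hx₂ ⊢
  obtain ⟨s, hs, ρ, hρ, m, hm⟩ := refine_epi F ((F (YD F v (n+1))).w) A' x₂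
  have hm0 : π.map (m ≫ dD F v n) = 0 := by
    erw [π.map_comp, ← hm, Category.assoc, hx₂, comp_zero]
  have hmd : m ≫ dD F v n = 0 := hπT hU hπ hs _ hm0
  have hkill : m ≫ (F (YD F v (n+1))).p = 0 := by
    apply kill_step F hU (YD F v n) hs
    erw [Category.assoc]
    exact hmd
  obtain ⟨g, hg⟩ := factor_step F (YD F v (n+1)) hs m hkill
  refine ⟨π.obj s, ρ, hρ, π.map g, ?_⟩
  rw [hm, hg, π.map_comp]
  rfl

lemma resCplx_exact0 (hU : ClusterTilting U)
    (hπ : ∀ ⦃x y : D⦄ (f : x ⟶ y), π.map f = 0 ↔ FactorsThru U f) :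
    (ShortComplex.mk (π.map (dD F v 0)) (π.map ((F v).p))
      (by erw [← π.map_comp, show dD F v 0 ≫ (F v).p = 0 from dD_p F v 0,
        π.map_zero])).Exact := by
  rw [ShortComplex.exact_iff_exact_up_to_refinements]
  intro A' x₂ hx₂
  dsimp at x₂ hx₂
  obtain ⟨s, hs, ρ, hρ, m, hm⟩ := refine_epi F ((F v).w) A' x₂
  have hm0 : π.map (m ≫ (F v).p) = 0 := by
    erw [π.map_comp, ← hm, Category.assoc, hx₂, comp_zero]
  have hmp : m ≫ (F v).p = 0 := hπT hU hπ hs _ hm0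
  obtain ⟨g, hg⟩ := factor_step F v hs m hmp
  refine ⟨π.obj s, ρ, hρ, π.map g, ?_⟩
  dsimp
  erw [hm, hg, π.map_comp]
  rfl

/-- The projective resolution of `π.obj v`. -/
def resolution (hU : ClusterTilting U)
    (hπ : ∀ ⦃x y : D⦄ (f : x ⟶ y), π.map f = 0 ↔ FactorsThru U f) : ProjectiveResolution (π.obj v) where
  complex := resCplx F v
  projective := fun n => (F (YD F v n)).proj
  π := (ChainComplex.toSingle₀Equiv _ _).symm ⟨π.map ((F v).p), by
    have h0 : (resCplx F v).d 1 0 = π.map (dD F v 0) := resCplx_d F v 0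
    erw [h0, ← π.map_comp, show dD F v 0 ≫ (F v).p = 0 from dD_p F v 0, π.map_zero]; rfl⟩
  quasiIso := ⟨fun n => by
    cases n with
    | zero =>
      rw [ChainComplex.quasiIsoAt₀_iff, ShortComplex.quasiIso_iff_of_zeros']
      · refine (ShortComplex.exact_and_epi_g_iff_of_iso ?_).2
          ⟨resCplx_exact0 F v hU hπ, ?_⟩
        · refine ShortComplex.isoMk (Iso.refl _) (Iso.refl _) (Iso.refl _) ?_ ?_
          · have h0 : (resCplx F v).d 1 0 = π.map (dD F v 0) := resCplx_d F v 0
            dsimp only [HomologicalComplex.shortComplexFunctor',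
              HomologicalComplex.shortComplexFunctor]
            simp [h0]
            erw [Category.id_comp, Category.comp_id]
          · dsimp only [HomologicalComplex.shortComplexFunctor',
              HomologicalComplex.shortComplexFunctor]
            simp [ChainComplex.toSingle₀Equiv_symm_apply_f_zero]
            erw [Category.id_comp, Category.comp_id]
            erw [ChainComplex.toSingle₀Equiv_symm_apply_f_zero]
        · have := (F v).pepi
          dsimp only [HomologicalComplex.shortComplexFunctor',
            HomologicalComplex.shortComplexFunctor]
          exact this
      all_goals rfl
    | succ n =>
      rw [quasiIsoAt_iff_exactAt']
      · exact resCplx_exactAt F v hU hπ n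
      · apply ChainComplex.exactAt_succ_single_obj⟩

end Tower

lemma main {k : Type*} [Field k] [Linear k A] [EnoughProjectives A]
    (hU : ClusterTilting U)
    (hπ : ∀ ⦃x y : D⦄ (f : x ⟶ y), π.map f = 0 ↔ FactorsThru U f)
    (F : ∀ y : D, PRD U π y) (v v' : D)
    (hVr : ∀ f : v ⟶ v'⟦(1:ℤ)⟧, f = 0) :
    Subsingleton (((Ext k A 1).obj (op (π.obj v))).obj (π.obj v')) := by
  set P : ProjectiveResolution (π.obj v) := resolution F v hU hπ with hP
  have hz : IsZero ((P.complex.linearYonedaObj k (π.obj v')).homology 1) := by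
    rw [← HomologicalComplex.exactAt_iff_isZero_homology]
    rw [HomologicalComplex.exactAt_iff' _ 0 1 2 (by simp) (by simp)]
    rw [ShortComplex.moduleCat_exact_iff]
    intro φ hφ
    dsimp [HomologicalComplex.sc', HomologicalComplex.shortComplexFunctor',
      ChainComplex.linearYonedaObj] at φ hφ ⊢
    change P.complex.d 2 1 ≫ φ = 0 at hφ
    change ∃ x₁ : P.complex.X 0 ⟶ π.obj v', P.complex.d 1 0 ≫ x₁ = φ
    have hd21 : P.complex.d 2 1 = π.map (dD F v 1) := resCplx_d F v 1
    have hd10 : P.complex.d 1 0 = π.map (dD F v 0) := resCplx_d F v 0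
    erw [hd21] at hφ
    -- step 1 : cancel the epi `π.map ((F (YD F v 2)).p)`
    have h1 : π.map ((F (YD F v 1)).a) ≫ φ = 0 := by
      have hepi : Epi (π.map ((F (YD F v 2)).p)) := (F (YD F v 2)).pepi
      have hcomp : π.map ((F (YD F v 2)).p) ≫ π.map ((F (YD F v 1)).a) ≫ φ =
          π.map ((F (YD F v 2)).p) ≫ 0 := by
        erw [comp_zero, ← Category.assoc, ← π.map_comp]
        exact hφ
      exact (cancel_epi (π.map ((F (YD F v 2)).p))).mp hcomp
    -- step 2 : `φ` descends along `π.map ((F (YD F v 1)).p)`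
    have hap : (F (YD F v 1)).a ≫ (F (YD F v 1)).p = 0 :=
      comp_distTriang_mor_zero₁₂ _ (F (YD F v 1)).dist
    have hSC : (ShortComplex.mk (π.map ((F (YD F v 1)).a)) (π.map ((F (YD F v 1)).p))
        (by rw [← π.map_comp, hap, π.map_zero])).Exact := by
      rw [ShortComplex.exact_iff_exact_up_to_refinements]
      intro B x hx
      dsimp at x hx
      obtain ⟨s, hs, ρ, hρ, m, hm⟩ := refine_epi F ((F (YD F v 1)).w) B x
      have hm0 : π.map (m ≫ (F (YD F v 1)).p) = 0 := by
        rw [π.map_comp, ← hm, Category.assoc, hx, comp_zero]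
      have hmp : m ≫ (F (YD F v 1)).p = 0 := hπT hU hπ hs _ hm0
      obtain ⟨g₀, hg₀⟩ := Triangle.coyoneda_exact₂ _ (F (YD F v 1)).dist m hmp
      refine ⟨π.obj s, ρ, hρ, π.map g₀, ?_⟩
      dsimp
      erw [hm, hg₀, π.map_comp]
      rfl
    haveI hepi1 : Epi (ShortComplex.mk (π.map ((F (YD F v 1)).a))
        (π.map ((F (YD F v 1)).p))
        (by rw [← π.map_comp, hap, π.map_zero])).g := (F (YD F v 1)).pepi
    obtain ⟨ψ', hψ'⟩ := hSC.desc' φ h1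
    -- step 3 : rigidity of `V` lets us extend over the next step of the resolution
    have hmor : (Triangle.mk (F v).a (F v).p (F v).δ).invRotate.mor₁ ≫
        π.preimage ψ' = 0 := shift_neg_one_zero hVr _
    obtain ⟨χ, hχ⟩ := Triangle.yoneda_exact₂ _ (inv_rot_of_distTriang _ (F v).dist)
      (π.preimage ψ') hmor
    have hχ' : π.preimage ψ' = (F v).a ≫ χ := hχ
    refine ⟨π.map χ, ?_⟩
    rw [hd10]
    have hsplit : π.map (dD F v 0) = π.map ((F (YD F v 1)).p) ≫ π.map ((F v).a) := by
      erw [← π.map_comp]; rfl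
    erw [hsplit, Category.assoc, ← π.map_comp, ← hχ', π.map_preimage]
    exact hψ'
  have hzext : IsZero (((Ext k A 1).obj (op (π.obj v))).obj (π.obj v')) :=
    IsZero.of_iso hz (P.isoExt 1 (π.obj v'))
  have hid : 𝟙 (((Ext k A 1).obj (op (π.obj v))).obj (π.obj v')) = 0 :=
    (IsZero.iff_id_eq_zero _).mp hzext
  constructor
  intro a b
  have ha : ∀ c : (((Ext k A 1).obj (op (π.obj v))).obj (π.obj v')), c = 0 := by
    intro c
    have h2 : (𝟙 (((Ext k A 1).obj (op (π.obj v))).obj (π.obj v'))) c =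
        (0 : (((Ext k A 1).obj (op (π.obj v))).obj (π.obj v')) ⟶
          (((Ext k A 1).obj (op (π.obj v))).obj (π.obj v'))) c := by rw [hid]
    simpa using h2
  rw [ha a, ha b]

end Main

end Stmt10Aux

/-- Let `D` be a triangulated category with cluster tilting subcategory `U` such that the
abelian quotient `D/U` has finite global dimension.  If `V` is a cluster tilting
subcategory of `D`, then `Ext¹_{D/U}(v̄, v̄′) = 0` for all `v, v′ ∈ V`: the projected
subcategory `V̄` is rigid. -/
theorem stmt10 {k : Type*} [Field k]
    {D : Type*} [Category D] [Preadditive D] [Linear k D] [HasZeroObject D]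
    [HasShift D ℤ] [∀ (n : ℤ), (shiftFunctor D n).Additive] [Pretriangulated D]
    [∀ x y : D, FiniteDimensional k (x ⟶ y)]
    (S : D ⥤ D) [S.IsEquivalence]
    (hSerre : ∀ a b : D, Nonempty ((a ⟶ b) ≃ₗ[k] Module.Dual k (b ⟶ S.obj a)))
    (U : Set D) (hU : ClusterTilting U)
    {A : Type*} [Category A] [Abelian A] [Linear k A] [EnoughProjectives A]
    (π : D ⥤ A) [π.Full] [π.EssSurj] [π.Additive]
    (hπ : ∀ ⦃x y : D⦄ (f : x ⟶ y), π.map f = 0 ↔ FactorsThru U f)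
    (hgl : FinGlobalDim k A)
    (V : Set D) (hV : ClusterTilting V) :
    ∀ v ∈ V, ∀ v' ∈ V,
      Subsingleton (((Ext k A 1).obj (op (π.obj v))).obj (π.obj v')) := by
  intro v hv v' hv'
  have hVr : ∀ f : v ⟶ v'⟦(1:ℤ)⟧, f = 0 := fun f => ((hV.1.2 v).mp hv) v' hv' f
  exact Stmt10Aux.main hU hπ
    (fun y => Classical.choice (Stmt10Aux.nonempty_PRD hU hπ y)) v v' hVr
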